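/- Consider the coevolutionary model in which agents update their actions and opinions by the best-response update rule, and suppose Assumptions 1 and 2 hold. Then for every initial state z(0) ∈ {-1,+1}^n × [-1,1]^n, the state z(t) converges to a steady state z* = (x*, y*): there exists a finite time τ such that x(t) = x* for all t ≥ τ, and lim_{t→∞} y(t) = y*. -/

import Mathlib

set_option maxHeartbeats 1000000


open Finset Matrix Filter

/-- The quantity `δ_i(z)`. -/
noncomputable def deltaFn {n : ℕ} (A W : Fin n → Fin n → ℝ) (α lam β γ : ℝ)
    (u x y : Fin n → ℝ) (i : Fin n) : ℝ :=
  2 * lam * β * (1 - lam) * ((1 - γ) * ∑ j, W i j * y j + γ * u i)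
    + (1 - β) * lam / 2 * ∑ j, A i j * (2 * x j + α * (1 + x j))

/-- `S(d; x_i)`: `+1` if `d > 0`, `-1` if `d < 0`, and `x_i` if `d = 0`. -/
noncomputable def brSign (d xi : ℝ) : ℝ := if 0 < d then 1 else if d < 0 then -1 else xi

/-- A nonnegative matrix (given as a function) is irreducible if for every pair of indices
some power of the matrix has a positive entry there. -/
def FunIrreducible {n : ℕ} (W : Fin n → Fin n → ℝ) : Prop :=
  ∀ i j, ∃ k : ℕ, 0 < ((Matrix.of W) ^ k) i j

/-! ### Auxiliary sum-update lemmas -/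

lemma sum_ite_outer {n : ℕ} (c : Prop) [Decidable c] (g : Fin n → ℝ) :
    ∑ k, (if c then g k else 0) = if c then ∑ k, g k else 0 := by
  split <;> simp

lemma upd_eq {n : ℕ} (x : Fin n → ℝ) (i : Fin n) (ξ : ℝ) :
    Function.update x i ξ = fun j => x j + (if j = i then ξ - x i else 0) := by
  funext j
  by_cases h : j = i <;> simp [Function.update_apply, h]

lemma sum_upd {n : ℕ} (x : Fin n → ℝ) (i : Fin n) (ξ : ℝ) :
    ∑ j, Function.update x i ξ j = (∑ j, x j) + (ξ - x i) := by
  rw [upd_eq]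
  rw [Finset.sum_add_distrib, Finset.sum_ite_eq' Finset.univ i (fun _ => ξ - x i)]
  simp

lemma sum_mul_upd {n : ℕ} (c x : Fin n → ℝ) (i : Fin n) (ξ : ℝ) :
    ∑ j, c j * Function.update x i ξ j = (∑ j, c j * x j) + c i * (ξ - x i) := by
  rw [upd_eq]
  simp only [mul_add, mul_ite, mul_zero, Finset.sum_add_distrib,
    Finset.sum_ite_eq' Finset.univ i]
  simp

lemma dot_upd {n : ℕ} (x y : Fin n → ℝ) (i : Fin n) (ξ η : ℝ) :
    ∑ j, Function.update x i ξ j * Function.update y i η j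
      = (∑ j, x j * y j) + (ξ * η - x i * y i) := by
  have h : ∀ j, Function.update x i ξ j * Function.update y i η j
      = x j * y j + (if j = i then ξ * η - x i * y i else 0) := by
    intro j
    by_cases h : j = i
    · subst h
      simp only [Function.update_self, if_true, eq_self_iff_true]
      ring
    · simp [Function.update_apply, h]
  simp only [h, Finset.sum_add_distrib, Finset.sum_ite_eq' Finset.univ i]
  simp

lemma qform_upd {n : ℕ} (M : Fin n → Fin n → ℝ) (hM : ∀ j k, M j k = M k j)
    (x : Fin n → ℝ) (i : Fin n) (ξ : ℝ) :
    ∑ j, ∑ k, M j k * Function.update x i ξ j * Function.update x i ξ k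
      = (∑ j, ∑ k, M j k * x j * x k)
        + 2 * (ξ - x i) * (∑ k, M i k * x k) + (ξ - x i) ^ 2 * M i i := by
  rw [upd_eq]
  have expand : ∀ j k : Fin n,
      M j k * (x j + (if j = i then ξ - x i else 0)) * (x k + (if k = i then ξ - x i else 0))
      = M j k * x j * x k + (if k = i then M j k * x j * (ξ - x i) else 0)
        + (if j = i then M j k * x k * (ξ - x i) else 0)
        + (if j = i then (if k = i then M j k * (ξ - x i)^2 else 0) else 0) := by
    intro j k
    by_cases h1 : j = i <;> by_cases h2 : k = i <;> simp [h1, h2] <;> ring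
  simp only [expand, Finset.sum_add_distrib, sum_ite_outer,
    Finset.sum_ite_eq' Finset.univ i, Finset.mem_univ, if_true]
  have h1 : ∑ j, M j i * x j * (ξ - x i) = (∑ k, M i k * x k) * (ξ - x i) := by
    rw [Finset.sum_mul]
    exact Finset.sum_congr rfl (fun j _ => by rw [hM j i])
  have h2 : ∑ k, M i k * x k * (ξ - x i) = (∑ k, M i k * x k) * (ξ - x i) :=
    (Finset.sum_mul ..).symm
  rw [h1, h2]
  ring

/-! ### The potential function -/

noncomputable def Psi {n : ℕ} (A W : Fin n → Fin n → ℝ) (α lam β γ : ℝ)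
    (u x y : Fin n → ℝ) : ℝ :=
  (1-β)*lam*(2+α)/4 * (∑ j, ∑ k, A j k * x j * x k)
  + (1-β)*lam*α/2 * (∑ j, x j)
  + 2*lam*β * (∑ j, x j * y j)
  - β * (∑ j, y j * y j)
  + β*((1-lam)*(1-γ)) * (∑ j, ∑ k, W j k * y j * y k)
  + 2*β*(1-lam)*γ * (∑ j, u j * y j)

lemma psi_step {n : ℕ} (A W : Fin n → Fin n → ℝ) (α lam β γ : ℝ)
    (u x y : Fin n → ℝ) (i : Fin n)
    (hW : ∀ j k, 0 ≤ W j k) (hArow : ∀ j, ∑ k, A j k = 1)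
    (hAsymm : ∀ j k, A j k = A k j) (hWsymm : ∀ j k, W j k = W k j)
    (hβ0 : 0 < β) (hlam1 : lam < 1) (hγ1 : γ < 1)
    (hx : x i = -1 ∨ x i = 1)
    (ξ η : ℝ)
    (hξ : ξ = brSign (deltaFn A W α lam β γ u x y i) (x i))
    (hη : η = (1-lam)*((1-γ)*(∑ j, W i j * y j) + γ*u i) + lam*ξ) :
    Psi A W α lam β γ u x y + (if ξ = x i then 0 else (1-β)*lam*(2+α)*A i i)
      ≤ Psi A W α lam β γ u (Function.update x i ξ) (Function.update y i η) := by
  have hρ0 : 0 ≤ (1-lam)*(1-γ) := mul_nonneg (by linarith) (by linarith)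
  have hδe : deltaFn A W α lam β γ u x y i
      = 2*lam*β*(1-lam)*((1-γ)*(∑ j, W i j * y j) + γ*u i)
        + ((1-β)*lam*(2+α)/2 * (∑ j, A i j * x j) + (1-β)*lam*α/2) := by
    unfold deltaFn
    have h2 : ∑ j, A i j * (2*x j + α*(1+x j))
        = (2+α)*(∑ j, A i j * x j) + α*(∑ j, A i j) := by
      rw [Finset.mul_sum, Finset.mul_sum, ← Finset.sum_add_distrib]
      exact Finset.sum_congr rfl (fun j _ => by ring)
    rw [h2, hArow i]
    ring
  set δ := deltaFn A W α lam β γ u x y i with hδdef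
  have hEq : Psi A W α lam β γ u (Function.update x i ξ) (Function.update y i η)
      = Psi A W α lam β γ u x y
        + ((1-β)*lam*(2+α)/4*(2*(ξ - x i)*(∑ k, A i k * x k) + (ξ - x i)^2*A i i)
           + (1-β)*lam*α/2*(ξ - x i)
           + 2*lam*β*(ξ*η - x i * y i)
           - β*(η^2 - y i * y i)
           + β*((1-lam)*(1-γ))*(2*(η - y i)*(∑ k, W i k * y k) + (η - y i)^2*W i i)
           + 2*β*(1-lam)*γ*(u i * (η - y i))) := by
    unfold Psi
    rw [qform_upd A hAsymm x i ξ, qform_upd W hWsymm y i η, sum_upd x i ξ,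
      dot_upd x y i ξ η, dot_upd y y i η η, sum_mul_upd u y i η]
    ring
  rw [hEq]
  refine (add_le_add_iff_left _).2 ?_
  subst hη
  by_cases hflip : ξ = x i
  · rw [if_pos hflip, hflip]
    have h1 : 0 ≤ β * ((1-lam)*(1-γ)*((∑ k, W i k * y k) - W i i * y i)
        + (1-lam)*γ*u i + lam*(x i) - (1 - (1-lam)*(1-γ)*W i i)*y i)^2 :=
      mul_nonneg hβ0.le (sq_nonneg _)
    have h2 : 0 ≤ β * ((1-lam)*(1-γ)) * W i i
        * ((1-lam)*(1-γ)*((∑ k, W i k * y k) - W i i * y i)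
        + (1-lam)*γ*u i + lam*(x i) - (1 - (1-lam)*(1-γ)*W i i)*y i)^2 :=
      mul_nonneg (mul_nonneg (mul_nonneg hβ0.le hρ0) (hW i i)) (sq_nonneg _)
    linarith [h1, h2]
  · rw [if_neg hflip]
    rcases hx with hs | hs
    · -- x i = -1, so flip means ξ = 1 and 0 < δ
      have hδpos : 0 < δ := by
        by_contra h
        push_neg at h
        rcases lt_or_eq_of_le h with h' | h'
        · apply hflip
          rw [hξ]
          unfold brSign
          rw [if_neg (by linarith), if_pos h', hs]
        · apply hflip
          rw [hξ]
          unfold brSign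
          rw [if_neg (by simp [h']), if_neg (by simp [h'])]
      have hξ1 : ξ = 1 := by
        rw [hξ]; unfold brSign; rw [if_pos hδpos]
      rw [hδe] at hδpos
      rw [hξ1, hs]
      have h2 : 0 ≤ β * ((1-lam)*(1-γ)) * W i i
          * (-(y i - (1-lam)*((1-γ)*(∑ k, W i k * y k) + γ*u i)) + lam)^2 :=
        mul_nonneg (mul_nonneg (mul_nonneg hβ0.le hρ0) (hW i i)) (sq_nonneg _)
      have h3 : 0 ≤ β * (-(y i - (1-lam)*((1-γ)*(∑ k, W i k * y k) + γ*u i)) - lam)^2 :=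
        mul_nonneg hβ0.le (sq_nonneg _)
      linarith [h2, h3, hδpos]
    · -- x i = 1, so flip means ξ = -1 and δ < 0
      have hδneg : δ < 0 := by
        rcases lt_trichotomy δ 0 with h' | h' | h'
        · exact h'
        · exfalso; apply hflip; rw [hξ]; unfold brSign
          rw [if_neg (by simp [h']), if_neg (by simp [h'])]
        · exfalso; apply hflip; rw [hξ]; unfold brSign
          rw [if_pos h', hs]
      have hξ1 : ξ = -1 := by
        rw [hξ]; unfold brSign
        rw [if_neg (by linarith), if_pos hδneg]
      rw [hδe] at hδneg
      rw [hξ1, hs]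
      have h2 : 0 ≤ β * ((1-lam)*(1-γ)) * W i i
          * ((y i - (1-lam)*((1-γ)*(∑ k, W i k * y k) + γ*u i)) + lam)^2 :=
        mul_nonneg (mul_nonneg (mul_nonneg hβ0.le hρ0) (hW i i)) (sq_nonneg _)
      have h3 : 0 ≤ β * ((y i - (1-lam)*((1-γ)*(∑ k, W i k * y k) + γ*u i)) - lam)^2 :=
        mul_nonneg hβ0.le (sq_nonneg _)
      linarith [h2, h3, hδneg]

/-! ### Bounds on the potential -/

lemma abs_qsum_le {n : ℕ} (M : Fin n → Fin n → ℝ) (f g : Fin n → ℝ)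
    (hM : ∀ j k, 0 ≤ M j k) (hrow : ∀ j, ∑ k, M j k = 1)
    (hf : ∀ j, |f j| ≤ 1) (hg : ∀ j, |g j| ≤ 1) :
    |∑ j, ∑ k, M j k * f j * g k| ≤ (n : ℝ) := by
  calc |∑ j, ∑ k, M j k * f j * g k| ≤ ∑ j, |∑ k, M j k * f j * g k| :=
        Finset.abs_sum_le_sum_abs _ _
    _ ≤ ∑ j : Fin n, (1 : ℝ) := by
        refine Finset.sum_le_sum (fun j _ => ?_)
        calc |∑ k, M j k * f j * g k| ≤ ∑ k, |M j k * f j * g k| :=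
              Finset.abs_sum_le_sum_abs _ _
          _ ≤ ∑ k, M j k := by
              refine Finset.sum_le_sum (fun k _ => ?_)
              rw [abs_mul, abs_mul, abs_of_nonneg (hM j k)]
              calc M j k * |f j| * |g k| ≤ M j k * 1 * 1 := by
                    apply mul_le_mul (mul_le_mul le_rfl (hf j) (abs_nonneg _) (hM j k))
                      (hg k) (abs_nonneg _) (mul_nonneg (hM j k) zero_le_one)
                _ = M j k := by ring
          _ = 1 := hrow j
    _ = (n : ℝ) := by simp

lemma abs_dot_le {n : ℕ} (f g : Fin n → ℝ) (hf : ∀ j, |f j| ≤ 1) (hg : ∀ j, |g j| ≤ 1) :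
    |∑ j, f j * g j| ≤ (n : ℝ) := by
  calc |∑ j, f j * g j| ≤ ∑ j, |f j * g j| := Finset.abs_sum_le_sum_abs _ _
    _ ≤ ∑ j : Fin n, (1 : ℝ) := by
        refine Finset.sum_le_sum (fun j _ => ?_)
        rw [abs_mul]
        calc |f j| * |g j| ≤ 1 * 1 := mul_le_mul (hf j) (hg j) (abs_nonneg _) zero_le_one
          _ = 1 := by ring
    _ = (n : ℝ) := by simp

lemma abs_sum1_le {n : ℕ} (f : Fin n → ℝ) (hf : ∀ j, |f j| ≤ 1) :
    |∑ j, f j| ≤ (n : ℝ) := by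
  calc |∑ j, f j| ≤ ∑ j, |f j| := Finset.abs_sum_le_sum_abs _ _
    _ ≤ ∑ j : Fin n, (1 : ℝ) := Finset.sum_le_sum (fun j _ => hf j)
    _ = (n : ℝ) := by simp

lemma psi_bound {n : ℕ} (A W : Fin n → Fin n → ℝ) (α lam β γ : ℝ) (u x y : Fin n → ℝ)
    (hA : ∀ j k, 0 ≤ A j k) (hW : ∀ j k, 0 ≤ W j k)
    (hArow : ∀ j, ∑ k, A j k = 1) (hWrow : ∀ j, ∑ k, W j k = 1)
    (hα : 0 ≤ α) (hlam0 : 0 < lam) (hlam1 : lam < 1)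
    (hβ0 : 0 < β) (hβ1 : β < 1) (hγ0 : 0 < γ) (hγ1 : γ < 1)
    (hu : ∀ j, |u j| ≤ 1) (hx : ∀ j, |x j| ≤ 1) (hy : ∀ j, |y j| ≤ 1) :
    |Psi A W α lam β γ u x y|
      ≤ (n : ℝ) * ((1-β)*lam*(2+α)/4 + (1-β)*lam*α/2 + 2*lam*β + β
          + β*((1-lam)*(1-γ)) + 2*β*(1-lam)*γ) := by
  have hc1 : (0:ℝ) ≤ (1-β)*lam*(2+α)/4 := by
    apply div_nonneg _ (by norm_num)
    apply mul_nonneg (mul_nonneg (by linarith) hlam0.le) (by linarith)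
  have hc2 : (0:ℝ) ≤ (1-β)*lam*α/2 := by
    apply div_nonneg _ (by norm_num)
    exact mul_nonneg (mul_nonneg (by linarith) hlam0.le) hα
  have hc3 : (0:ℝ) ≤ 2*lam*β := by positivity
  have hc5 : (0:ℝ) ≤ β*((1-lam)*(1-γ)) :=
    mul_nonneg hβ0.le (mul_nonneg (by linarith) (by linarith))
  have hc6 : (0:ℝ) ≤ 2*β*(1-lam)*γ := by
    apply mul_nonneg (mul_nonneg (by linarith) (by linarith)) hγ0.le
  have hQA := abs_qsum_le A x x hA hArow hx hx
  have hQW := abs_qsum_le W y y hW hWrow hy hy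
  have hLX := abs_sum1_le x hx
  have hXY := abs_dot_le x y hx hy
  have hYY := abs_dot_le y y hy hy
  have hUY := abs_dot_le u y hu hy
  have bnd : ∀ c S : ℝ, 0 ≤ c → |S| ≤ (n:ℝ) → c*S ≤ c*n ∧ -(c*(n:ℝ)) ≤ c*S := by
    intro c S hc hS
    rw [abs_le] at hS
    constructor
    · exact mul_le_mul_of_nonneg_left hS.2 hc
    · nlinarith [hS.1]
  have b1 := bnd _ _ hc1 hQA
  have b2 := bnd _ _ hc2 hLX
  have b3 := bnd _ _ hc3 hXY
  have b4 := bnd _ _ hβ0.le hYY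
  have b5 := bnd _ _ hc5 hQW
  have b6 := bnd _ _ hc6 hUY
  rw [abs_le]
  unfold Psi
  constructor <;> nlinarith [b1.1, b1.2, b2.1, b2.2, b3.1, b3.2, b4.1, b4.2, b5.1, b5.2, b6.1, b6.2]


theorem stmt12 {n : ℕ} (hn : 2 ≤ n) (A W : Fin n → Fin n → ℝ) (α lam β γ : ℝ)
    (u : Fin n → ℝ)
    (hA : ∀ j k, 0 ≤ A j k) (hW : ∀ j k, 0 ≤ W j k)
    (hArow : ∀ j, ∑ k, A j k = 1) (hWrow : ∀ j, ∑ k, W j k = 1)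
    (hAirr : FunIrreducible A) (hWirr : FunIrreducible W)
    (hα : 0 ≤ α) (hlam : lam ∈ Set.Ioo (0 : ℝ) 1) (hβ : β ∈ Set.Ioo (0 : ℝ) 1)
    (hγ : γ ∈ Set.Ioo (0 : ℝ) 1) (hu : ∀ j, u j ∈ Set.Icc (-1 : ℝ) 1)
    -- Assumption 1: symmetric layers and positive self-loops on the influence layer
    (hAsymm : ∀ j k, A j k = A k j) (hWsymm : ∀ j k, W j k = W k j)
    (hAdiag : ∀ j, 0 < A j j)
    -- the trajectory of the coevolutionary model: σ t is the agent active at time t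
    (x y : ℕ → Fin n → ℝ) (σ : ℕ → Fin n)
    (h0x : ∀ j, x 0 j = -1 ∨ x 0 j = 1) (h0y : ∀ j, y 0 j ∈ Set.Icc (-1 : ℝ) 1)
    (hupx : ∀ t, x (t + 1) (σ t) =
      brSign (deltaFn A W α lam β γ u (x t) (y t) (σ t)) (x t (σ t)))
    (hupy : ∀ t, y (t + 1) (σ t) =
      (1 - lam) * ((1 - γ) * (∑ j, W (σ t) j * y t j) + γ * u (σ t)) +
        lam * brSign (deltaFn A W α lam β γ u (x t) (y t) (σ t)) (x t (σ t)))
    (hkeep : ∀ t j, j ≠ σ t → x (t + 1) j = x t j ∧ y (t + 1) j = y t j)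
    -- Assumption 2: in every window of length T every agent activates at least once
    (T : ℕ) (hT : ∀ t : ℕ, ∀ i : Fin n, ∃ s : ℕ, t ≤ s ∧ s < t + T ∧ σ s = i) :
    ∃ xstar ystar : Fin n → ℝ,
      (∃ τ : ℕ, ∀ t, τ ≤ t → ∀ i, x t i = xstar i) ∧
      (∀ i, Tendsto (fun t => y t i) atTop (nhds (ystar i))) := by
  classical
  obtain ⟨hlam0, hlam1⟩ := hlam
  obtain ⟨hβ0, hβ1⟩ := hβ
  obtain ⟨hγ0, hγ1⟩ := hγ
  have hu' : ∀ j, |u j| ≤ 1 := fun j => abs_le.2 ⟨(hu j).1, (hu j).2⟩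
  -- the invariant: actions stay in {-1,1}, opinions in [-1,1]
  have hinv : ∀ t, (∀ j, x t j = -1 ∨ x t j = 1) ∧ (∀ j, |y t j| ≤ 1) := by
    intro t
    induction t with
    | zero => exact ⟨h0x, fun j => abs_le.2 ⟨(h0y j).1, (h0y j).2⟩⟩
    | succ t ih =>
      obtain ⟨ihx, ihy⟩ := ih
      have hS2 : |∑ j, W (σ t) j * y t j| ≤ 1 := by
        calc |∑ j, W (σ t) j * y t j| ≤ ∑ j, |W (σ t) j * y t j| :=
              Finset.abs_sum_le_sum_abs _ _
          _ ≤ ∑ j, W (σ t) j := by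
              refine Finset.sum_le_sum (fun j _ => ?_)
              rw [abs_mul, abs_of_nonneg (hW _ j)]
              exact mul_le_of_le_one_right (hW _ j) (ihy j)
          _ = 1 := hWrow _
      have hbr : brSign (deltaFn A W α lam β γ u (x t) (y t) (σ t)) (x t (σ t)) = -1 ∨
          brSign (deltaFn A W α lam β γ u (x t) (y t) (σ t)) (x t (σ t)) = 1 := by
        unfold brSign
        split
        · right; rfl
        · split
          · left; rfl
          · exact ihx (σ t)
      have hbrabs : |brSign (deltaFn A W α lam β γ u (x t) (y t) (σ t)) (x t (σ t))| ≤ 1 := by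
        rcases hbr with h | h <;> rw [h] <;> norm_num
      constructor
      · intro j
        by_cases hj : j = σ t
        · subst hj; rw [hupx]; exact hbr
        · rw [(hkeep t j hj).1]; exact ihx j
      · intro j
        by_cases hj : j = σ t
        · subst hj
          rw [hupy]
          have h1 : |(1-γ)*(∑ j, W (σ t) j * y t j) + γ*u (σ t)| ≤ 1 := by
            calc |(1-γ)*(∑ j, W (σ t) j * y t j) + γ*u (σ t)|
                ≤ |(1-γ)*(∑ j, W (σ t) j * y t j)| + |γ*u (σ t)| := abs_add_le _ _
              _ = (1-γ)*|∑ j, W (σ t) j * y t j| + γ*|u (σ t)| := by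
                  rw [abs_mul, abs_mul, abs_of_nonneg (by linarith : (0:ℝ) ≤ 1-γ),
                    abs_of_nonneg hγ0.le]
              _ ≤ (1-γ)*1 + γ*1 := by
                  have := hu' (σ t)
                  gcongr <;> linarith
              _ = 1 := by ring
          set b := brSign (deltaFn A W α lam β γ u (x t) (y t) (σ t)) (x t (σ t)) with hb
          set S := (1-γ)*(∑ j, W (σ t) j * y t j) + γ*u (σ t) with hS
          have h2 : |(1-lam)*S + lam*b| ≤ (1-lam)*|S| + lam*|b| := by
            calc |(1-lam)*S + lam*b| ≤ |(1-lam)*S| + |lam*b| := abs_add_le _ _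
              _ = (1-lam)*|S| + lam*|b| := by
                  rw [abs_mul, abs_mul, abs_of_nonneg (by linarith : (0:ℝ) ≤ 1-lam),
                    abs_of_nonneg hlam0.le]
          have h3 : (1-lam)*|S| ≤ (1-lam)*1 :=
            mul_le_mul_of_nonneg_left h1 (by linarith)
          have h4 : lam*|b| ≤ lam*1 := mul_le_mul_of_nonneg_left hbrabs hlam0.le
          linarith
        · rw [(hkeep t j hj).2]; exact ihy j
  -- the updates in `Function.update` form
  have hux : ∀ t, x (t+1) = Function.update (x t) (σ t)
      (brSign (deltaFn A W α lam β γ u (x t) (y t) (σ t)) (x t (σ t))) := by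
    intro t; funext j
    by_cases hj : j = σ t
    · subst hj; rw [Function.update_self]; exact hupx t
    · rw [Function.update_of_ne hj]; exact (hkeep t j hj).1
  have huy : ∀ t, y (t+1) = Function.update (y t) (σ t)
      ((1-lam)*((1-γ)*(∑ j, W (σ t) j * y t j) + γ*u (σ t)) +
        lam * brSign (deltaFn A W α lam β γ u (x t) (y t) (σ t)) (x t (σ t))) := by
    intro t; funext j
    by_cases hj : j = σ t
    · subst hj; rw [Function.update_self]; exact hupy t
    · rw [Function.update_of_ne hj]; exact (hkeep t j hj).2
  -- step inequality for the potential
  have hstep : ∀ t, Psi A W α lam β γ u (x t) (y t)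
      + (if x (t+1) = x t then 0 else (1-β)*lam*(2+α)*A (σ t) (σ t))
      ≤ Psi A W α lam β γ u (x (t+1)) (y (t+1)) := by
    intro t
    have hgate : (x (t+1) = x t) ↔
        (brSign (deltaFn A W α lam β γ u (x t) (y t) (σ t)) (x t (σ t)) = x t (σ t)) := by
      rw [hux t]; exact Function.update_eq_self_iff
    have hmain := psi_step A W α lam β γ u (x t) (y t) (σ t) hW hArow hAsymm hWsymm
      hβ0 hlam1 hγ1 ((hinv t).1 (σ t)) _ _ rfl rfl
    rw [← hux t, ← huy t] at hmain
    rw [if_congr hgate rfl rfl]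
    exact hmain
  have hgate0 : ∀ t, (0:ℝ) ≤ if x (t+1) = x t then 0 else (1-β)*lam*(2+α)*A (σ t) (σ t) := by
    intro t
    split
    · exact le_rfl
    · exact mul_nonneg (mul_nonneg (mul_nonneg (by linarith) hlam0.le) (by linarith))
        (hA _ _)
  have hmono : ∀ s t, s ≤ t →
      Psi A W α lam β γ u (x s) (y s) ≤ Psi A W α lam β γ u (x t) (y t) := by
    intro s t hst
    induction t, hst using Nat.le_induction with
    | base => exact le_rfl
    | succ t ht ih =>
      have h1 := hstep t
      have h2 := hgate0 t
      linarith
  -- uniform flip gain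
  have hne : (Finset.univ : Finset (Fin n)).Nonempty := by
    refine ⟨⟨0, by omega⟩, Finset.mem_univ _⟩
  obtain ⟨i0, -, hi0⟩ := Finset.exists_min_image Finset.univ (fun i => A i i) hne
  have hζ0 : 0 < (1-β)*lam*(2+α)*A i0 i0 := by
    apply mul_pos _ (hAdiag i0)
    apply mul_pos (mul_pos (by linarith) hlam0) (by linarith)
  have hstep' : ∀ t, x (t+1) ≠ x t →
      Psi A W α lam β γ u (x t) (y t) + (1-β)*lam*(2+α)*A i0 i0
      ≤ Psi A W α lam β γ u (x (t+1)) (y (t+1)) := by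
    intro t hne'
    have h1 := hstep t
    rw [if_neg hne'] at h1
    have h2 : (1-β)*lam*(2+α)*A i0 i0 ≤ (1-β)*lam*(2+α)*A (σ t) (σ t) := by
      apply mul_le_mul_of_nonneg_left (hi0 (σ t) (Finset.mem_univ _))
      apply mul_nonneg (mul_nonneg (by linarith) hlam0.le) (by linarith)
    linarith
  -- the uniform bound on the potential
  set Cb : ℝ := (n : ℝ) * ((1-β)*lam*(2+α)/4 + (1-β)*lam*α/2 + 2*lam*β + β
      + β*((1-lam)*(1-γ)) + 2*β*(1-lam)*γ) with hCb
  have hbound : ∀ t, |Psi A W α lam β γ u (x t) (y t)| ≤ Cb := by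
    intro t
    apply psi_bound A W α lam β γ u (x t) (y t) hA hW hArow hWrow hα hlam0 hlam1
      hβ0 hβ1 hγ0 hγ1 hu' _ (hinv t).2
    intro j
    rcases (hinv t).1 j with h | h <;> rw [h] <;> norm_num
  -- finitely many action flips
  have hfin : ∃ τ, ∀ t, τ ≤ t → x (t+1) = x t := by
    by_contra hcon
    push_neg at hcon
    have grow : ∀ k : ℕ, ∃ m, Psi A W α lam β γ u (x 0) (y 0)
        + k * ((1-β)*lam*(2+α)*A i0 i0) ≤ Psi A W α lam β γ u (x m) (y m) := by
      intro k
      induction k with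
      | zero => exact ⟨0, by simp⟩
      | succ k ih =>
        obtain ⟨m, hm⟩ := ih
        obtain ⟨t, htm, hnm⟩ := hcon m
        refine ⟨t+1, ?_⟩
        have h1 := hmono m t htm
        have h2 := hstep' t hnm
        push_cast
        linarith
    obtain ⟨k, hk⟩ := exists_nat_gt ((2*Cb) / ((1-β)*lam*(2+α)*A i0 i0))
    obtain ⟨m, hm⟩ := grow k
    rw [div_lt_iff₀ hζ0] at hk
    have hb1 := abs_le.1 (hbound m)
    have hb2 := abs_le.1 (hbound 0)
    linarith [hb1.1, hb1.2, hb2.1, hb2.2, hm, hk]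
  obtain ⟨τ, hτ⟩ := hfin
  have hxconst : ∀ t, τ ≤ t → x t = x τ := by
    intro t ht
    induction t, ht using Nat.le_induction with
    | base => rfl
    | succ t ht ih => rw [hτ t ht, ih]
  -- the opinion fixed point
  set ρ : ℝ := (1-lam)*(1-γ) with hρdef
  have hρ0 : 0 ≤ ρ := mul_nonneg (by linarith) (by linarith)
  have hρ1 : ρ < 1 := by nlinarith
  set F : (Fin n → ℝ) → (Fin n → ℝ) :=
    fun z i => ρ * (∑ j, W i j * z j) + ((1-lam)*γ*u i + lam * x τ i) with hF
  have hFpt : ∀ z w : Fin n → ℝ, ∀ i, dist (F z i) (F w i) ≤ ρ * dist z w := by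
    intro z w i
    have hsub : ∑ j, W i j * (z j - w j) = (∑ j, W i j * z j) - (∑ j, W i j * w j) := by
      rw [← Finset.sum_sub_distrib]
      exact Finset.sum_congr rfl (fun j _ => by ring)
    have hdiff : F z i - F w i = ρ * ∑ j, W i j * (z j - w j) := by
      simp only [hF, hsub]
      ring
    rw [Real.dist_eq, hdiff, abs_mul, abs_of_nonneg hρ0]
    apply mul_le_mul_of_nonneg_left _ hρ0
    calc |∑ j, W i j * (z j - w j)| ≤ ∑ j, |W i j * (z j - w j)| :=
          Finset.abs_sum_le_sum_abs _ _
      _ ≤ ∑ j, W i j * dist z w := by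
          refine Finset.sum_le_sum (fun j _ => ?_)
          rw [abs_mul, abs_of_nonneg (hW i j)]
          apply mul_le_mul_of_nonneg_left _ (hW i j)
          rw [← Real.dist_eq]
          exact dist_le_pi_dist z w j
      _ = dist z w := by rw [← Finset.sum_mul, hWrow i, one_mul]
  have hlip : LipschitzWith ⟨ρ, hρ0⟩ F := by
    apply LipschitzWith.of_dist_le_mul
    intro z w
    refine (dist_pi_le_iff (mul_nonneg (NNReal.coe_nonneg _) dist_nonneg)).2
      (fun i => ?_)
    exact hFpt z w i
  have hcontr : ContractingWith ⟨ρ, hρ0⟩ F := by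
    constructor
    · exact_mod_cast hρ1
    · exact hlip
  set ystar : Fin n → ℝ := ContractingWith.fixedPoint F hcontr with hystar
  have hfix : F ystar = ystar := hcontr.fixedPoint_isFixedPt
  -- opinions follow the fixed-point iteration after τ
  have hFy : ∀ t, τ ≤ t → y (t+1) (σ t) = F (y t) (σ t) := by
    intro t ht
    have hbrx : brSign (deltaFn A W α lam β γ u (x t) (y t) (σ t)) (x t (σ t))
        = x τ (σ t) := by
      rw [← hupx t]
      have := hxconst (t+1) (le_trans ht (Nat.le_succ t))
      rw [this]
    rw [hupy t, hbrx, hF]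
    simp only
    ring
  -- window decay
  have hwin : ∀ t, τ ≤ t → ∀ d,
      (∀ j, dist (y (t+d) j) (ystar j) ≤ dist (y t) ystar) ∧
      (∀ j, (∃ s, t ≤ s ∧ s < t + d ∧ σ s = j) →
        dist (y (t+d) j) (ystar j) ≤ ρ * dist (y t) ystar) := by
    intro t ht d
    induction d with
    | zero =>
      constructor
      · intro j; exact dist_le_pi_dist _ _ j
      · rintro j ⟨s, h1, h2, -⟩; omega
    | succ d ih =>
      have hd1 : dist (y (t+d)) ystar ≤ dist (y t) ystar :=
        (dist_pi_le_iff dist_nonneg).2 ih.1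
      have hnew : dist (y (t+d+1) (σ (t+d))) (ystar (σ (t+d))) ≤ ρ * dist (y t) ystar := by
        rw [hFy (t+d) (by omega)]
        have hys : ystar (σ (t+d)) = F ystar (σ (t+d)) := (congrFun hfix (σ (t+d))).symm
        rw [hys]
        calc dist (F (y (t+d)) (σ (t+d))) (F ystar (σ (t+d)))
            ≤ ρ * dist (y (t+d)) ystar := hFpt _ _ _
          _ ≤ ρ * dist (y t) ystar := mul_le_mul_of_nonneg_left hd1 hρ0
      constructor
      · intro j
        by_cases hj : j = σ (t+d)
        · subst hj
          calc dist (y (t+(d+1)) (σ (t+d))) (ystar (σ (t+d)))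
              ≤ ρ * dist (y t) ystar := hnew
            _ ≤ 1 * dist (y t) ystar :=
                mul_le_mul_of_nonneg_right hρ1.le dist_nonneg
            _ = dist (y t) ystar := one_mul _
        · have : y (t+(d+1)) j = y (t+d) j := (hkeep (t+d) j hj).2
          rw [show t+(d+1) = (t+d)+1 from rfl, (hkeep (t+d) j hj).2]
          exact ih.1 j
      · rintro j ⟨s, hs1, hs2, hs3⟩
        by_cases hj : j = σ (t+d)
        · subst hj; exact hnew
        · have hs2' : s < t + d := by
            rcases Nat.lt_or_ge s (t+d) with h | h
            · exact h
            · exfalso; apply hj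
              have : s = t + d := by omega
              rw [← hs3, this]
          rw [show t+(d+1) = (t+d)+1 from rfl, (hkeep (t+d) j hj).2]
          exact ih.2 j ⟨s, hs1, hs2', hs3⟩
  have hdecT : ∀ t, τ ≤ t → dist (y (t+T)) ystar ≤ ρ * dist (y t) ystar := by
    intro t ht
    exact (dist_pi_le_iff (mul_nonneg hρ0 dist_nonneg)).2
      (fun j => (hwin t ht T).2 j (hT t j))
  have hmonoM : ∀ t, τ ≤ t → ∀ d, dist (y (t+d)) ystar ≤ dist (y t) ystar :=
    fun t ht d => (dist_pi_le_iff dist_nonneg).2 (hwin t ht d).1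
  have hgeo : ∀ k : ℕ, dist (y (τ + k*T)) ystar ≤ ρ^k * dist (y τ) ystar := by
    intro k
    induction k with
    | zero => simp
    | succ k ih =>
      have h1 : τ + (k+1)*T = (τ + k*T) + T := by ring
      rw [h1]
      calc dist (y ((τ + k*T) + T)) ystar ≤ ρ * dist (y (τ + k*T)) ystar :=
            hdecT _ (by omega)
        _ ≤ ρ * (ρ^k * dist (y τ) ystar) := mul_le_mul_of_nonneg_left ih hρ0
        _ = ρ^(k+1) * dist (y τ) ystar := by ring
  have hM0 : Tendsto (fun t => dist (y t) ystar) atTop (nhds 0) := by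
    rw [Metric.tendsto_atTop]
    intro ε hε
    have hpow : Tendsto (fun k : ℕ => ρ^k * dist (y τ) ystar) atTop (nhds 0) := by
      have := (tendsto_pow_atTop_nhds_zero_of_lt_one hρ0 hρ1).mul_const (dist (y τ) ystar)
      rwa [zero_mul] at this
    obtain ⟨k, hk⟩ := (Metric.tendsto_atTop.1 hpow ε hε) 
    have hk' := hk k le_rfl
    rw [Real.dist_eq, sub_zero] at hk'
    have hkpos : ρ^k * dist (y τ) ystar < ε := lt_of_abs_lt hk'
    refine ⟨τ + k*T, fun t htk => ?_⟩
    rw [Real.dist_eq, sub_zero, abs_of_nonneg dist_nonneg]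
    have h1 : t = (τ + k*T) + (t - (τ + k*T)) := by omega
    calc dist (y t) ystar = dist (y ((τ + k*T) + (t - (τ + k*T)))) ystar := by rw [← h1]
      _ ≤ dist (y (τ + k*T)) ystar := hmonoM _ (by omega) _
      _ ≤ ρ^k * dist (y τ) ystar := hgeo k
      _ < ε := hkpos
  refine ⟨x τ, ystar, ⟨τ, fun t ht i => by rw [hxconst t ht]⟩, fun i => ?_⟩
  have hle : ∀ t, dist (y t i) (ystar i) ≤ dist (y t) ystar :=
    fun t => dist_le_pi_dist _ _ i
  rw [tendsto_iff_dist_tendsto_zero]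
  exact squeeze_zero (fun t => dist_nonneg) hle hM0
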